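/- arXiv:1409.3619 — 2 statements merged into one kernel-verified Lean document; each statement's English description precedes it below -/
import Mathlib

section
/- Let B be a real m × n matrix, r a positive integer, and α > 0 a real number. Let ω⁽¹⁾, …, ω⁽ʳ⁾ be independent standard Gaussian random vectors in ℝⁿ (each with law the product of n copies of the standard normal distribution N(0,1)). Then the probability that ‖B‖ > α·√(2/π)·max_{i=1,…,r} ‖B ω⁽ⁱ⁾‖ is at most α^{−r}, where ‖B‖ denotes the ℓ²→ℓ² operator norm of B and ‖·‖ the Euclidean norm on ℝᵐ. -/
set_option maxHeartbeats 1000000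

open MeasureTheory ProbabilityTheory

section Aux

open Real RealInnerProductSpace
open scoped NNReal ENNReal

private lemma gaussian_abs_lt_le' (v : ℝ≥0) (hv : v ≠ 0) (t : ℝ) :
    gaussianReal 0 v {x : ℝ | |x| < t} ≤ ENNReal.ofReal (2 * t / Real.sqrt (2 * π * v)) := by
  have hs : {x : ℝ | |x| < t} = Set.Ioo (-t) t := by ext x; simp [abs_lt]
  rw [gaussianReal_apply 0 hv]
  calc ∫⁻ x in {x : ℝ | |x| < t}, gaussianPDF 0 v x
      ≤ ∫⁻ _x in {x : ℝ | |x| < t}, ENNReal.ofReal ((Real.sqrt (2 * π * v))⁻¹) := by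
        refine lintegral_mono fun x => ?_
        refine ENNReal.ofReal_le_ofReal ?_
        unfold gaussianPDFReal
        calc (√(2 * π * v))⁻¹ * rexp (- (x - 0)^2 / (2 * v))
            ≤ (√(2 * π * v))⁻¹ * 1 := by
              refine mul_le_mul_of_nonneg_left ?_ (by positivity)
              refine Real.exp_le_one_iff.mpr ?_
              apply div_nonpos_of_nonpos_of_nonneg
              · simp [sq_nonneg]
              · positivity
          _ = (√(2 * π * v))⁻¹ := mul_one _
    _ = ENNReal.ofReal ((Real.sqrt (2 * π * v))⁻¹) * volume {x : ℝ | |x| < t} := by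
        rw [setLIntegral_const]
    _ ≤ ENNReal.ofReal (2 * t / Real.sqrt (2 * π * v)) := by
        rw [hs, Real.volume_Ioo]
        rw [← ENNReal.ofReal_mul (by positivity)]
        refine ENNReal.ofReal_le_ofReal ?_
        rw [div_eq_mul_inv]
        ring_nf
        exact le_of_eq (by ring)

private lemma gaussianPDFReal_conv' (v₁ v₂ : ℝ≥0) (h₁ : v₁ ≠ 0) (h₂ : v₂ ≠ 0) (z : ℝ) :
    ∫ x, gaussianPDFReal 0 v₁ x * gaussianPDFReal x v₂ z
      = gaussianPDFReal 0 (v₁ + v₂) z := by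
  have hv₁ : (0:ℝ) < v₁ := lt_of_le_of_ne v₁.coe_nonneg (by exact_mod_cast (Ne.symm h₁))
  have hv₂ : (0:ℝ) < v₂ := lt_of_le_of_ne v₂.coe_nonneg (by exact_mod_cast (Ne.symm h₂))
  set V : ℝ := (v₁ : ℝ) + (v₂ : ℝ) with hVdef
  have hV : (0:ℝ) < V := by positivity
  set a : ℝ := (v₁ : ℝ) * z / V with hadef
  set b : ℝ := V / (2 * (v₁:ℝ) * (v₂:ℝ)) with hbdef
  have hb : (0:ℝ) < b := by positivity
  have hpt : ∀ x, gaussianPDFReal 0 v₁ x * gaussianPDFReal x v₂ z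
      = ((√(2*π*v₁))⁻¹ * (√(2*π*v₂))⁻¹ * rexp (- z^2 / (2*V))) * rexp (-b * (x - a)^2) := by
    intro x
    unfold gaussianPDFReal
    have hexp : rexp (- (x - 0)^2 / (2*(v₁:ℝ))) * rexp (- (z - x)^2 / (2*(v₂:ℝ)))
        = rexp (- z^2 / (2*V)) * rexp (-b * (x - a)^2) := by
      rw [← Real.exp_add, ← Real.exp_add]
      congr 1
      rw [hbdef, hadef, hVdef]
      field_simp
      ring
    calc (√(2*π*v₁))⁻¹ * rexp (- (x - 0)^2 / (2*v₁)) * ((√(2*π*v₂))⁻¹ * rexp (- (z - x)^2 / (2*v₂)))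
        = (√(2*π*v₁))⁻¹ * (√(2*π*v₂))⁻¹ *
            (rexp (- (x - 0)^2 / (2*(v₁:ℝ))) * rexp (- (z - x)^2 / (2*(v₂:ℝ)))) := by ring
      _ = _ := by rw [hexp]; ring
  rw [integral_congr_ae (ae_of_all _ hpt), integral_const_mul,
    integral_sub_right_eq_self (fun x => rexp (-b * x^2)) a, integral_gaussian]
  have hconst : (√(2*π*v₁))⁻¹ * (√(2*π*v₂))⁻¹ * √(π/b) = (√(2*π*V))⁻¹ := by
    rw [← Real.sqrt_inv, ← Real.sqrt_inv, ← Real.sqrt_mul (by positivity),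
      ← Real.sqrt_mul (by positivity), ← Real.sqrt_inv]
    congr 1
    rw [hbdef]
    field_simp
  unfold gaussianPDFReal
  push_cast
  rw [← hVdef]
  rw [show (√(2*π*v₁))⁻¹ * (√(2*π*v₂))⁻¹ * rexp (- z^2 / (2*V)) * √(π/b)
      = (√(2*π*v₁))⁻¹ * (√(2*π*v₂))⁻¹ * √(π/b) * rexp (- z^2 / (2*V)) from by ring,
    hconst]
  norm_num

private lemma measurable_pdf2' (v : ℝ≥0) :
    Measurable (fun p : ℝ × ℝ => gaussianPDF p.1 v p.2) := by
  apply ENNReal.measurable_ofReal.comp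
  unfold gaussianPDFReal
  fun_prop

private lemma integrable_pdf_mul' (v₁ v₂ : ℝ≥0) (z : ℝ) :
    Integrable (fun x => gaussianPDFReal 0 v₁ x * gaussianPDFReal x v₂ z) := by
  have h : (fun x => gaussianPDFReal 0 v₁ x * gaussianPDFReal x v₂ z)
      = fun x => (gaussianPDFReal x v₂ z) * (gaussianPDFReal 0 v₁ x) := by
    ext x; ring
  rw [h]
  refine (integrable_gaussianPDFReal 0 v₁).bdd_mul (c := (√(2*π*v₂))⁻¹) ?_ ?_
  · apply Continuous.aestronglyMeasurable
    unfold gaussianPDFReal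
    fun_prop
  · refine ae_of_all _ fun x => ?_
    rw [Real.norm_eq_abs, abs_of_nonneg (gaussianPDFReal_nonneg _ _ _)]
    unfold gaussianPDFReal
    calc (√(2*π*v₂))⁻¹ * rexp (- (z - x)^2 / (2*v₂))
        ≤ (√(2*π*v₂))⁻¹ * 1 := by
          refine mul_le_mul_of_nonneg_left ?_ (by positivity)
          refine Real.exp_le_one_iff.mpr ?_
          apply div_nonpos_of_nonpos_of_nonneg
          · simp [sq_nonneg]
          · positivity
      _ = _ := mul_one _

private lemma gaussianReal_conv' (v₁ v₂ : ℝ≥0) :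
    ((gaussianReal 0 v₁).prod (gaussianReal 0 v₂)).map (fun p : ℝ × ℝ => p.1 + p.2)
      = gaussianReal 0 (v₁ + v₂) := by
  by_cases h₁ : v₁ = 0
  · subst h₁
    rw [gaussianReal_zero_var, Measure.dirac_prod, Measure.map_map measurable_add
      measurable_prodMk_left]
    simp [Function.comp_def]
  by_cases h₂ : v₂ = 0
  · subst h₂
    rw [gaussianReal_zero_var, Measure.prod_dirac, Measure.map_map measurable_add
      measurable_prodMk_right]
    simp [Function.comp_def]
  have hV : v₁ + v₂ ≠ 0 := by simp [h₁]
  ext s hs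
  rw [Measure.map_apply measurable_add hs, Measure.prod_apply (measurable_add hs)]
  have hkey : ∀ x : ℝ, gaussianReal 0 v₂ (Prod.mk x ⁻¹' ((fun p : ℝ × ℝ => p.1 + p.2) ⁻¹' s))
      = ∫⁻ z in s, gaussianPDF x v₂ z := by
    intro x
    have h0 : Prod.mk x ⁻¹' ((fun p : ℝ × ℝ => p.1 + p.2) ⁻¹' s) = (fun y => x + y) ⁻¹' s := rfl
    rw [h0, ← Measure.map_apply (measurable_const_add x) hs, gaussianReal_map_const_add,
      gaussianReal_apply _ h₂, zero_add]
  simp_rw [hkey]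
  have huncur : Measurable (Function.uncurry fun x z => gaussianPDF x v₂ z) :=
    measurable_pdf2' v₂
  have hF : Measurable fun x : ℝ => ∫⁻ z in s, gaussianPDF x v₂ z :=
    huncur.lintegral_prod_right
  rw [gaussianReal_of_var_ne_zero _ h₁,
    lintegral_withDensity_eq_lintegral_mul _ (measurable_gaussianPDF _ _) hF]
  simp only [Pi.mul_apply]
  have huncur2 : Measurable (Function.uncurry fun x z => gaussianPDF 0 v₁ x * gaussianPDF x v₂ z) :=
    ((measurable_gaussianPDF 0 v₁).comp measurable_fst).mul huncur
  calc ∫⁻ x, gaussianPDF 0 v₁ x * ∫⁻ z in s, gaussianPDF x v₂ z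
      = ∫⁻ x, ∫⁻ z in s, gaussianPDF 0 v₁ x * gaussianPDF x v₂ z := by
        congr 1; ext x
        rw [lintegral_const_mul _ (measurable_gaussianPDF x v₂)]
    _ = ∫⁻ z in s, ∫⁻ x, gaussianPDF 0 v₁ x * gaussianPDF x v₂ z := by
        exact lintegral_lintegral_swap huncur2.aemeasurable
    _ = ∫⁻ z in s, gaussianPDF 0 (v₁ + v₂) z := by
        refine setLIntegral_congr_fun hs (fun z _ => ?_)
        unfold gaussianPDF
        simp_rw [← ENNReal.ofReal_mul (gaussianPDFReal_nonneg _ _ _)]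
        rw [← ofReal_integral_eq_lintegral_ofReal (integrable_pdf_mul' v₁ v₂ z)
            (ae_of_all _ fun x => mul_nonneg (gaussianPDFReal_nonneg _ _ _)
              (gaussianPDFReal_nonneg _ _ _)),
          gaussianPDFReal_conv' v₁ v₂ h₁ h₂ z]
    _ = gaussianReal 0 (v₁ + v₂) s := (gaussianReal_apply _ hV s).symm

private lemma gaussian_map_linear_comb' : ∀ (n : ℕ) (w : Fin n → ℝ),
    (Measure.pi fun _ : Fin n => gaussianReal 0 1).map (fun x => ∑ j, w j * x j)
      = gaussianReal 0 (∑ j, Real.toNNReal (w j ^ 2)) := by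
  intro n
  induction n with
  | zero =>
    intro w
    simp only [Finset.univ_eq_empty, Finset.sum_empty]
    rw [show (fun x : Fin 0 → ℝ => (0:ℝ)) = fun _ => 0 from rfl, Measure.map_const]
    simp [gaussianReal_zero_var]
  | succ n ih =>
    intro w
    have hmp := measurePreserving_piFinSuccAbove (fun _ : Fin (n+1) => gaussianReal 0 1) 0
    set e := MeasurableEquiv.piFinSuccAbove (fun _ : Fin (n+1) => ℝ) 0 with he
    have hg : Measurable fun p : ℝ × (Fin n → ℝ) =>
        w 0 * p.1 + ∑ j, w (Fin.succAbove 0 j) * p.2 j := by fun_prop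
    have hcomp : (fun x : Fin (n+1) → ℝ => ∑ j, w j * x j)
        = (fun p : ℝ × (Fin n → ℝ) => w 0 * p.1 + ∑ j, w (Fin.succAbove 0 j) * p.2 j) ∘ e := by
      ext x
      simp only [Function.comp_apply, he, MeasurableEquiv.piFinSuccAbove_apply]
      rw [Fin.sum_univ_succAbove (fun j => w j * x j) 0]
      rfl
    rw [hcomp, ← Measure.map_map hg e.measurable, hmp.map_eq]
    have hsplit : (fun p : ℝ × (Fin n → ℝ) => w 0 * p.1 + ∑ j, w (Fin.succAbove 0 j) * p.2 j)
        = (fun q : ℝ × ℝ => q.1 + q.2) ∘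
          (Prod.map (fun y : ℝ => w 0 * y)
            (fun z : Fin n → ℝ => ∑ j, w (Fin.succAbove 0 j) * z j)) := by
      ext p; rfl
    rw [hsplit, ← Measure.map_map measurable_add (by fun_prop),
      ← Measure.map_prod_map _ _ (by fun_prop) (by fun_prop),
      ih (fun j => w (Fin.succAbove 0 j)), gaussianReal_map_const_mul (w 0),
      mul_zero, mul_one, gaussianReal_conv']
    congr 1
    rw [Fin.sum_univ_succAbove (fun j => Real.toNNReal (w j ^ 2)) 0]
    congr 1
    ext
    simp [Real.coe_toNNReal _ (sq_nonneg _)]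

private lemma exists_max_vector' {n m : ℕ}
    (T : EuclideanSpace ℝ (Fin n) →L[ℝ] EuclideanSpace ℝ (Fin m))
    (hT : T ≠ 0) : ∃ v : EuclideanSpace ℝ (Fin n), ‖v‖ = 1 ∧ ‖T v‖ = ‖T‖ := by
  have hn : n ≠ 0 := by
    rintro rfl
    refine hT ?_
    ext x
    have hx : x = 0 := Subsingleton.elim x 0
    rw [hx, map_zero, ContinuousLinearMap.zero_apply]
  have hne : Nonempty (Fin n) := ⟨⟨0, Nat.pos_of_ne_zero hn⟩⟩
  have hx0 : ∃ x : EuclideanSpace ℝ (Fin n), ‖x‖ = 1 := by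
    refine ⟨EuclideanSpace.single hne.some 1, ?_⟩
    rw [EuclideanSpace.norm_single, norm_one]
  obtain ⟨x0, hx0⟩ := hx0
  have hsph : (Metric.sphere (0 : EuclideanSpace ℝ (Fin n)) 1).Nonempty :=
    ⟨x0, by simpa [mem_sphere_zero_iff_norm] using hx0⟩
  obtain ⟨v, hvmem, hvmax⟩ := (isCompact_sphere (0 : EuclideanSpace ℝ (Fin n)) 1).exists_isMaxOn
    hsph ((continuous_norm.comp T.continuous).continuousOn)
  have hv1 : ‖v‖ = 1 := mem_sphere_zero_iff_norm.mp hvmem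
  refine ⟨v, hv1, le_antisymm ?_ ?_⟩
  · calc ‖T v‖ ≤ ‖T‖ * ‖v‖ := T.le_opNorm v
      _ = ‖T‖ := by rw [hv1, mul_one]
  · refine ContinuousLinearMap.opNorm_le_bound T (norm_nonneg _) fun x => ?_
    by_cases hx : x = 0
    · simp [hx]
    · have hxn : (0:ℝ) < ‖x‖ := norm_pos_iff.mpr hx
      have hy : ‖x‖⁻¹ • x ∈ Metric.sphere (0 : EuclideanSpace ℝ (Fin n)) 1 := by
        rw [mem_sphere_zero_iff_norm, norm_smul, norm_inv, norm_norm, inv_mul_cancel₀ hxn.ne']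
      have h2 : ‖T (‖x‖⁻¹ • x)‖ ≤ ‖T v‖ := hvmax hy
      rw [_root_.map_smul, norm_smul, norm_inv, norm_norm] at h2
      calc ‖T x‖ = ‖x‖ * (‖x‖⁻¹ * ‖T x‖) := by field_simp
        _ ≤ ‖x‖ * ‖T v‖ := by
            refine mul_le_mul_of_nonneg_left ?_ hxn.le
            exact h2
        _ = ‖T v‖ * ‖x‖ := mul_comm _ _

end Aux

open Real RealInnerProductSpace
open scoped NNReal ENNReal

/-- Randomized a posteriori norm estimate (Halko–Martinsson–Tropp): for a real `m × n`
matrix `B`, `r` independent standard Gaussian test vectors `ω⁽¹⁾,…,ω⁽ʳ⁾` in `ℝⁿ`, and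
`α > 0`, the probability that `‖B‖ > α·√(2/π)·max_i ‖B ω⁽ⁱ⁾‖` is at most `α⁻ʳ`.
Here `‖B‖` is the `ℓ² → ℓ²` operator norm and the `r` independent standard Gaussian
vectors are modelled by the product measure of `r · n` copies of `N(0,1)`. -/
theorem randomized_norm_estimate
    {m n : ℕ} (B : Matrix (Fin m) (Fin n) ℝ) (r : ℕ) (hr : 0 < r)
    (α : ℝ) (hα : 0 < α) :
    (Measure.pi fun _ : Fin r => Measure.pi fun _ : Fin n => gaussianReal 0 1)
      {ω : Fin r → Fin n → ℝ |
        α * Real.sqrt (2 / Real.pi) *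
            (⨆ i : Fin r, ‖(EuclideanSpace.equiv (Fin m) ℝ).symm (B.mulVec (ω i))‖)
          < ‖LinearMap.toContinuousLinearMap (Matrix.toEuclideanLin B)‖} ≤
      ENNReal.ofReal ((α ^ r)⁻¹) := by
  classical
  set T := LinearMap.toContinuousLinearMap (Matrix.toEuclideanLin B) with hTdef
  set c := Real.sqrt (2 / Real.pi) with hcdef
  have hπ := Real.pi_pos
  have hcpos : 0 < c := Real.sqrt_pos.mpr (by positivity)
  have hαc : 0 < α * c := mul_pos hα hcpos
  by_cases hT0 : T = 0
  · have hempty : {ω : Fin r → Fin n → ℝ | α * c * (⨆ i : Fin r,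
        ‖(EuclideanSpace.equiv (Fin m) ℝ).symm (B.mulVec (ω i))‖) < ‖T‖} = ∅ := by
      ext ω
      simp only [Set.mem_setOf_eq, Set.mem_empty_iff_false, iff_false, not_lt, hT0, norm_zero]
      exact mul_nonneg hαc.le (Real.iSup_nonneg fun i => norm_nonneg _)
    rw [hempty]
    simp
  · have hTpos : 0 < ‖T‖ := norm_pos_iff.mpr hT0
    obtain ⟨v, hv1, hvT⟩ := exists_max_vector' T hT0
    have hTv : 0 < ‖T v‖ := by rw [hvT]; exact hTpos
    set u : EuclideanSpace ℝ (Fin m) := ‖T v‖⁻¹ • T v with hudef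
    have hu : ‖u‖ = 1 := by
      rw [hudef, norm_smul, norm_inv, norm_norm, inv_mul_cancel₀ hTv.ne']
    set w : EuclideanSpace ℝ (Fin n) := (ContinuousLinearMap.adjoint T) u with hwdef
    have hw_inner : ∀ x : EuclideanSpace ℝ (Fin n), |⟪w, x⟫| ≤ ‖T x‖ := by
      intro x
      rw [hwdef, ContinuousLinearMap.adjoint_inner_left]
      calc |⟪u, T x⟫| ≤ ‖u‖ * ‖T x‖ := abs_real_inner_le_norm u (T x)
        _ = ‖T x‖ := by rw [hu, one_mul]
    have hwv : ⟪w, v⟫ = ‖T‖ := by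
      rw [hwdef, ContinuousLinearMap.adjoint_inner_left, hudef, real_inner_smul_left,
        real_inner_self_eq_norm_sq, ← hvT]
      field_simp
    have hwT : ‖T‖ ≤ ‖w‖ := by
      calc ‖T‖ = ⟪w, v⟫ := hwv.symm
        _ ≤ ‖w‖ * ‖v‖ := real_inner_le_norm w v
        _ = ‖w‖ := by rw [hv1, mul_one]
    have hwpos : 0 < ‖w‖ := lt_of_lt_of_le hTpos hwT
    set t := ‖T‖ / (α * c) with htdef
    have htpos : 0 < t := div_pos hTpos hαc
    have hsum : Measurable fun x : Fin n → ℝ => ∑ j, w j * x j := by fun_prop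
    have habs : MeasurableSet {y : ℝ | |y| < t} :=
      measurableSet_lt (_root_.continuous_abs.measurable) measurable_const
    set S : Set (Fin n → ℝ) := (fun x => ∑ j, w j * x j) ⁻¹' {y : ℝ | |y| < t} with hSdef
    have hsub : {ω : Fin r → Fin n → ℝ | α * c * (⨆ i : Fin r,
        ‖(EuclideanSpace.equiv (Fin m) ℝ).symm (B.mulVec (ω i))‖) < ‖T‖}
        ⊆ Set.pi Set.univ (fun _ : Fin r => S) := by
      intro ω hω
      rw [Set.mem_univ_pi]
      intro i
      have hexp : ∀ k : Fin r, ‖(EuclideanSpace.equiv (Fin m) ℝ).symm (B.mulVec (ω k))‖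
          = ‖T ((EuclideanSpace.equiv (Fin n) ℝ).symm (ω k))‖ := fun k => rfl
      have hle : ‖T ((EuclideanSpace.equiv (Fin n) ℝ).symm (ω i))‖
          ≤ ⨆ k : Fin r, ‖(EuclideanSpace.equiv (Fin m) ℝ).symm (B.mulVec (ω k))‖ := by
        rw [← hexp i]
        exact le_ciSup (f := fun k : Fin r => ‖(EuclideanSpace.equiv (Fin m) ℝ).symm (B.mulVec (ω k))‖) (Set.Finite.bddAbove (Set.finite_range _)) i
      have hlt : α * c * ‖T ((EuclideanSpace.equiv (Fin n) ℝ).symm (ω i))‖ < ‖T‖ :=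
        lt_of_le_of_lt (mul_le_mul_of_nonneg_left hle hαc.le) hω
      have hlt2 : ‖T ((EuclideanSpace.equiv (Fin n) ℝ).symm (ω i))‖ < t := by
        rw [htdef, lt_div_iff₀ hαc]
        linarith [hlt]
      show |∑ j, w j * ω i j| < t
      have hinner : ⟪w, (EuclideanSpace.equiv (Fin n) ℝ).symm (ω i)⟫ = ∑ j, w j * ω i j := by
        simp [PiLp.inner_apply, RCLike.inner_apply, conj_trivial]
        exact Finset.sum_congr rfl (fun _ _ => mul_comm _ _)
      calc |∑ j, w j * ω i j|
          = |⟪w, (EuclideanSpace.equiv (Fin n) ℝ).symm (ω i)⟫| := by rw [hinner]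
        _ ≤ ‖T ((EuclideanSpace.equiv (Fin n) ℝ).symm (ω i))‖ := hw_inner _
        _ < t := hlt2
    set V : ℝ≥0 := ∑ j, Real.toNNReal (w j ^ 2) with hVdef
    have hVcoe : (V : ℝ) = ‖w‖ ^ 2 := by
      rw [hVdef, EuclideanSpace.norm_eq, Real.sq_sqrt (by positivity)]
      push_cast [Real.coe_toNNReal _ (sq_nonneg _)]
      simp [sq_abs]
    have hV0 : V ≠ 0 := by
      intro h
      rw [h] at hVcoe
      simp only [NNReal.coe_zero] at hVcoe
      nlinarith
    have hsqrt2 : c * Real.sqrt (2 * Real.pi) = 2 := by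
      rw [hcdef, ← Real.sqrt_mul (by positivity),
        show 2 / Real.pi * (2 * Real.pi) = 4 from by field_simp; ring,
        show (4:ℝ) = 2^2 from by norm_num, Real.sqrt_sq (by norm_num)]
    have hkey : (Measure.pi fun _ : Fin n => gaussianReal 0 1) S ≤ ENNReal.ofReal α⁻¹ := by
      have hmap : (Measure.pi fun _ : Fin n => gaussianReal 0 1) S
          = gaussianReal 0 V {y : ℝ | |y| < t} := by
        rw [hSdef, ← Measure.map_apply hsum habs, gaussian_map_linear_comb' n (fun j => w j)]
      rw [hmap]
      refine le_trans (gaussian_abs_lt_le' V hV0 t) (ENNReal.ofReal_le_ofReal ?_)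
      have hsqrt : Real.sqrt (2 * Real.pi * V) = Real.sqrt (2 * Real.pi) * ‖w‖ := by
        rw [hVcoe, Real.sqrt_mul (by positivity), Real.sqrt_sq (norm_nonneg w)]
      rw [hsqrt]
      have hsq2pos : 0 < Real.sqrt (2 * Real.pi) := Real.sqrt_pos.mpr (by positivity)
      calc 2 * t / (Real.sqrt (2*Real.pi) * ‖w‖)
          ≤ 2 * t / (Real.sqrt (2*Real.pi) * ‖T‖) := by
            apply div_le_div_of_nonneg_left (by positivity) (by positivity)
            exact mul_le_mul_of_nonneg_left hwT (Real.sqrt_nonneg _)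
        _ = α⁻¹ := by
            rw [htdef]
            field_simp
            exact hsqrt2.symm
    refine le_trans (measure_mono hsub) ?_
    calc (Measure.pi fun _ : Fin r => Measure.pi fun _ : Fin n => gaussianReal 0 1)
          (Set.pi Set.univ (fun _ : Fin r => S))
        = ∏ _i : Fin r, (Measure.pi fun _ : Fin n => gaussianReal 0 1) S :=
          Measure.pi_pi _ _
      _ = (Measure.pi fun _ : Fin n => gaussianReal 0 1) S ^ r := by
          rw [Finset.prod_const, Finset.card_univ, Fintype.card_fin]
      _ ≤ ENNReal.ofReal α⁻¹ ^ r := by gcongr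
      _ = ENNReal.ofReal ((α ^ r)⁻¹) := by
          rw [← ENNReal.ofReal_pow (by positivity), inv_pow]
end

section
/- Let B be a real m × n matrix and α > 0 a real number, and let ω be a standard Gaussian random vector in ℝⁿ (its law is the product of n copies of the standard normal distribution N(0,1)). Then the probability that ‖B ω‖ < ‖B‖ / (α·√(2/π)) is at most α^{−1}, where ‖B‖ denotes the ℓ²→ℓ² operator norm of B and ‖·‖ the Euclidean norm on ℝᵐ. -/
open MeasureTheory ProbabilityTheory
open scoped ENNReal RealInnerProductSpace

lemma lintegral_pi_prod {n : ℕ} (μ : Fin n → Measure ℝ) [∀ i, SigmaFinite (μ i)]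
    (g : Fin n → ℝ → ℝ≥0∞) (hg : ∀ i, Measurable (g i)) :
    ∫⁻ x, ∏ i, g i (x i) ∂Measure.pi μ = ∏ i, ∫⁻ x, g i x ∂μ i := by
  induction n with
  | zero => simp
  | succ n ih =>
    have hmp := (measurePreserving_piFinSuccAbove μ 0).symm
    rw [← hmp.lintegral_comp]
    · simp_rw [MeasurableEquiv.piFinSuccAbove_symm_apply, Fin.insertNthEquiv,
        Fin.prod_univ_succ, Fin.insertNth_zero]
      simp only [Fin.zero_succAbove, Function.comp_def, Equiv.coe_fn_mk, Fin.cons_zero,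
        Fin.cons_succ, cast_eq]
      rw [lintegral_prod_mul (f := g 0) (g := fun y : Fin n → ℝ => ∏ i : Fin n, g i.succ (y i)) (hg 0).aemeasurable
        ((Finset.measurable_prod _
          (fun i _ => (hg i.succ).comp (measurable_pi_apply i))).aemeasurable)]
      rw [ih (fun i => μ i.succ) (fun i => g i.succ) (fun i => hg i.succ)]
    · exact Finset.measurable_prod _ (fun i _ => (hg i).comp (measurable_pi_apply i))

lemma pi_gaussian_eq_withDensity (n : ℕ) :
    (Measure.pi fun _ : Fin n => gaussianReal 0 1) =
      volume.withDensity (fun x : Fin n → ℝ => ∏ i, gaussianPDF 0 1 (x i)) := by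
  refine (Measure.pi_eq fun s hs => ?_)
  rw [withDensity_apply _ (MeasurableSet.univ_pi hs)]
  have : ∀ i, gaussianReal 0 1 (s i) = ∫⁻ x, (s i).indicator (gaussianPDF 0 1) x ∂volume := by
    intro i
    rw [gaussianReal_apply 0 one_ne_zero (s i), ← lintegral_indicator (hs i)]
  simp_rw [this]
  rw [← lintegral_pi_prod (fun _ => volume)
      (fun i => (s i).indicator (gaussianPDF 0 1))
      (fun i => Measurable.indicator (measurable_gaussianPDFReal 0 1).ennreal_ofReal (hs i))]
  rw [← lintegral_indicator (MeasurableSet.univ_pi hs), volume_pi]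
  congr 1
  ext x
  by_cases hx : x ∈ Set.pi Set.univ s
  · rw [Set.indicator_of_mem hx]
    exact Finset.prod_congr rfl fun i _ => by
      rw [Set.indicator_of_mem (hx i (Set.mem_univ i))]
  · rw [Set.indicator_of_notMem hx]
    rw [Set.mem_univ_pi] at hx
    push_neg at hx
    obtain ⟨i, hi⟩ := hx
    exact (Finset.prod_eq_zero (Finset.mem_univ i) (Set.indicator_of_notMem hi _)).symm

lemma map_withDensity_gen {α β : Type*} [MeasurableSpace α] [MeasurableSpace β]
    {μ : Measure α} {ν : Measure β} {g : α → β} (hg : Measurable g) (hgm : μ.map g = ν)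
    {f : β → ℝ≥0∞} (hf : Measurable f) :
    (μ.withDensity (f ∘ g)).map g = ν.withDensity f := by
  ext s hs
  rw [Measure.map_apply hg hs, withDensity_apply _ hs, withDensity_apply _ (hg hs), ← hgm,
    setLIntegral_map hs hf hg]
  rfl

lemma prod_gaussianPDF_eq (n : ℕ) (x : Fin n → ℝ) :
    ∏ i, gaussianPDF 0 1 (x i) =
      ENNReal.ofReal (((Real.sqrt (2 * Real.pi))⁻¹) ^ n * Real.exp (-(∑ i, (x i) ^ 2) / 2)) := by
  simp only [gaussianPDF]
  rw [← ENNReal.ofReal_prod_of_nonneg (fun i _ => gaussianPDFReal_nonneg 0 1 (x i))]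
  congr 1
  simp only [gaussianPDFReal, NNReal.coe_one, mul_one, sub_zero]
  rw [Finset.prod_mul_distrib, Finset.prod_const, ← Real.exp_sum]
  congr 1
  · simp
  · congr 1
    rw [← Finset.sum_div]
    congr 1
    rw [← Finset.sum_neg_distrib]

set_option maxHeartbeats 1000000 in
lemma gaussian_pi_map_isometry (n : ℕ) (e : EuclideanSpace ℝ (Fin n) ≃ₗᵢ[ℝ] EuclideanSpace ℝ (Fin n)) :
    (Measure.pi fun _ : Fin n => gaussianReal 0 1).map
        (fun ω : Fin n → ℝ => WithLp.equiv 2 (Fin n → ℝ) (e ((WithLp.equiv 2 (Fin n → ℝ)).symm ω)))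
      = Measure.pi fun _ : Fin n => gaussianReal 0 1 := by
  set ψ : (Fin n → ℝ) → (Fin n → ℝ) :=
    fun ω => WithLp.equiv 2 (Fin n → ℝ) (e ((WithLp.equiv 2 (Fin n → ℝ)).symm ω)) with hψ
  set f : (Fin n → ℝ) → ℝ≥0∞ := fun x => ∏ i, gaussianPDF 0 1 (x i) with hf
  have hfψ : f ∘ ψ = f := by
    funext ω
    simp only [Function.comp_apply, hf, prod_gaussianPDF_eq]
    congr 2
    have h1 : ∑ i, (ψ ω i) ^ 2 = ‖e ((WithLp.equiv 2 (Fin n → ℝ)).symm ω)‖ ^ 2 := by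
      rw [EuclideanSpace.norm_eq, Real.sq_sqrt (by positivity)]
      simp [ψ, Real.norm_eq_abs, sq_abs]
    have h2 : ∑ i, (ω i) ^ 2 = ‖(WithLp.equiv 2 (Fin n → ℝ)).symm ω‖ ^ 2 := by
      rw [EuclideanSpace.norm_eq, Real.sq_sqrt (by positivity)]
      simp [Real.norm_eq_abs, sq_abs]
    rw [h1, h2, e.norm_map]
  have hfm : Measurable f :=
    Finset.measurable_prod _ fun i _ =>
      ((measurable_gaussianPDFReal 0 1).ennreal_ofReal).comp (measurable_pi_apply i)
  have hψm : MeasurePreserving ψ (volume : Measure (Fin n → ℝ)) volume := by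
    have h3 := (EuclideanSpace.volume_preserving_symm_measurableEquiv_toLp (Fin n)).comp
      (e.measurePreserving.comp (EuclideanSpace.volume_preserving_symm_measurableEquiv_toLp (Fin n)).symm)
    have h4 : ψ = ⇑(MeasurableEquiv.toLp 2 (Fin n → ℝ)).symm ∘ ⇑e ∘
        ⇑(MeasurableEquiv.toLp 2 (Fin n → ℝ)).symm.symm := by
      rfl
    rw [h4]
    exact h3
  rw [pi_gaussian_eq_withDensity, ← hf]
  nth_rewrite 1 [← hfψ]
  exact map_withDensity_gen hψm.measurable hψm.map_eq hfm

lemma gaussian_pi_eval (n : ℕ) (i : Fin n) (s : Set ℝ) (hs : MeasurableSet s) :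
    (Measure.pi fun _ : Fin n => gaussianReal 0 1) {x : Fin n → ℝ | x i ∈ s}
      = gaussianReal 0 1 s := by
  classical
  have hset : {x : Fin n → ℝ | x i ∈ s} =
      Set.pi Set.univ (fun j => if j = i then s else Set.univ) := by
    ext x
    simp only [Set.mem_setOf_eq, Set.mem_univ_pi]
    constructor
    · intro h j
      by_cases hj : j = i
      · subst hj; simp [h]
      · simp [hj]
    · intro h
      have := h i
      simpa using this
  rw [hset, Measure.pi_pi]
  have : ∀ j ∈ Finset.univ, gaussianReal 0 1 (if j = i then s else Set.univ)
      = if j = i then gaussianReal 0 1 s else 1 := by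
    intro j _
    by_cases hj : j = i <;> simp [hj]
  rw [Finset.prod_congr rfl this, Finset.prod_ite_eq' Finset.univ i (fun _ => gaussianReal 0 1 s)]
  simp

lemma gaussianReal_Ioo_le (t : ℝ) (ht : 0 ≤ t) :
    gaussianReal 0 1 (Set.Ioo (-t) t) ≤ ENNReal.ofReal (t * Real.sqrt (2 / Real.pi)) := by
  rw [gaussianReal_apply 0 one_ne_zero]
  have hb : ∀ x : ℝ, gaussianPDF 0 1 x ≤ ENNReal.ofReal ((Real.sqrt (2 * Real.pi))⁻¹) := by
    intro x
    rw [gaussianPDF]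
    refine ENNReal.ofReal_le_ofReal ?_
    rw [gaussianPDFReal]
    simp only [NNReal.coe_one, mul_one, sub_zero]
    calc (Real.sqrt (2 * Real.pi))⁻¹ * Real.exp (-(x)^2 / 2)
        ≤ (Real.sqrt (2 * Real.pi))⁻¹ * 1 := by
          refine mul_le_mul_of_nonneg_left ?_ (by positivity)
          exact Real.exp_le_one_iff.mpr (by nlinarith [sq_nonneg x])
      _ = _ := mul_one _
  calc ∫⁻ x in Set.Ioo (-t) t, gaussianPDF 0 1 x
      ≤ ∫⁻ _x in Set.Ioo (-t) t, ENNReal.ofReal ((Real.sqrt (2 * Real.pi))⁻¹) :=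
        lintegral_mono fun x => hb x
    _ = ENNReal.ofReal ((Real.sqrt (2 * Real.pi))⁻¹) * volume (Set.Ioo (-t) t) := by
        rw [setLIntegral_const]
    _ ≤ ENNReal.ofReal (t * Real.sqrt (2 / Real.pi)) := by
        rw [Real.volume_Ioo, ← ENNReal.ofReal_mul (by positivity)]
        refine ENNReal.ofReal_le_ofReal (le_of_eq ?_)
        have hπ : 0 < Real.sqrt (2 * Real.pi) := Real.sqrt_pos.mpr (by positivity)
        have key : Real.sqrt (2 / Real.pi) * Real.sqrt (2 * Real.pi) = 2 := by
          rw [← Real.sqrt_mul (by positivity)]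
          rw [show (2 / Real.pi) * (2 * Real.pi) = 4 by field_simp; ring]
          rw [show (4 : ℝ) = 2 ^ 2 by norm_num, Real.sqrt_sq (by norm_num)]
        have h2 : Real.sqrt (2 / Real.pi) = 2 / Real.sqrt (2 * Real.pi) := by
          rw [eq_div_iff hπ.ne']
          exact key
        rw [h2]
        field_simp
        ring

lemma exists_good_unit_vector {E F : Type*} [NormedAddCommGroup E] [InnerProductSpace ℝ E]
    [NormedAddCommGroup F] [InnerProductSpace ℝ F] [FiniteDimensional ℝ E]
    [FiniteDimensional ℝ F] (L : E →L[ℝ] F) (hL : L ≠ 0) :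
    ∃ v : E, ‖v‖ = 1 ∧ ∀ y : E, ‖L‖ * |⟪v, y⟫| ≤ ‖L y‖ := by
  -- find a norm-attaining unit vector x
  obtain ⟨z, hz⟩ : ∃ z : E, L z ≠ 0 := by
    by_contra h
    push_neg at h
    exact hL (ContinuousLinearMap.ext fun z => by simp [h z])
  have hz0 : z ≠ 0 := fun h => hz (by simp [h])
  have hznorm : ‖z‖ ≠ 0 := norm_ne_zero_iff.mpr hz0
  have hsp : (‖z‖⁻¹ • z) ∈ Metric.sphere (0 : E) 1 := by
    simp [norm_smul, abs_of_nonneg (inv_nonneg.mpr (norm_nonneg z)), inv_mul_cancel₀ hznorm]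
  obtain ⟨x, hxsp, hmax⟩ := (isCompact_sphere (0 : E) 1).exists_isMaxOn ⟨_, hsp⟩
    (L.continuous.norm.continuousOn)
  have hx1 : ‖x‖ = 1 := by simpa using hxsp
  have hnorm : ‖L x‖ = ‖L‖ := by
    refine le_antisymm (by simpa [hx1] using L.le_opNorm x) ?_
    refine L.opNorm_le_bound (norm_nonneg (L x)) fun y => ?_
    rcases eq_or_ne y 0 with rfl | hy
    · simp
    · have hy0 : ‖y‖ ≠ 0 := norm_ne_zero_iff.mpr hy
      have hyy : (‖y‖⁻¹ • y) ∈ Metric.sphere (0 : E) 1 := by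
        simp [norm_smul, abs_of_nonneg (inv_nonneg.mpr (norm_nonneg y)), inv_mul_cancel₀ hy0]
      have := hmax hyy
      simp only [Set.mem_setOf_eq, _root_.map_smul, norm_smul, norm_inv, norm_norm] at this
      calc ‖L y‖ = ‖y‖ * (‖y‖⁻¹ * ‖L y‖) := by field_simp
        _ ≤ ‖y‖ * ‖L x‖ := mul_le_mul_of_nonneg_left this (norm_nonneg y)
        _ = ‖L x‖ * ‖y‖ := mul_comm _ _
  have hLpos : 0 < ‖L‖ := by
    rcases (norm_nonneg L).lt_or_eq with h | h
    · exact h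
    · exact absurd ((ContinuousLinearMap.opNorm_zero_iff L).mp h.symm) hL
  set w : E := ContinuousLinearMap.adjoint L (L x) with hw
  have hwy : ∀ y : E, ⟪w, y⟫ = ⟪L x, L y⟫ := fun y =>
    ContinuousLinearMap.adjoint_inner_left L y (L x)
  have hw_le : ‖w‖ ≤ ‖L‖ ^ 2 := by
    calc ‖w‖ ≤ ‖ContinuousLinearMap.adjoint L‖ * ‖L x‖ :=
          (ContinuousLinearMap.adjoint L).le_opNorm (L x)
      _ = ‖L‖ * ‖L‖ := by rw [ContinuousLinearMap.adjoint.norm_map, hnorm]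
      _ = ‖L‖ ^ 2 := (sq ‖L‖).symm
  have hw_ge : ‖L‖ ^ 2 ≤ ‖w‖ := by
    have h1 : ⟪w, x⟫ = ‖L x‖ ^ 2 := by
      rw [hwy x, real_inner_self_eq_norm_sq]
    have h2 : ⟪w, x⟫ ≤ ‖w‖ * ‖x‖ := real_inner_le_norm w x
    rw [h1, hnorm, hx1, mul_one] at h2
    exact h2
  have hw_norm : ‖w‖ = ‖L‖ ^ 2 := le_antisymm hw_le hw_ge
  refine ⟨(‖L‖ ^ 2)⁻¹ • w, ?_, ?_⟩
  · rw [norm_smul, hw_norm]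
    simp [abs_of_pos (by positivity : (0:ℝ) < (‖L‖ ^ 2)⁻¹)]
    field_simp
  · intro y
    rw [real_inner_smul_left, hwy y, abs_mul, abs_of_pos (by positivity : (0:ℝ) < (‖L‖ ^ 2)⁻¹)]
    have := abs_real_inner_le_norm (L x) (L y)
    calc ‖L‖ * ((‖L‖ ^ 2)⁻¹ * |⟪L x, L y⟫|)
        ≤ ‖L‖ * ((‖L‖ ^ 2)⁻¹ * (‖L x‖ * ‖L y‖)) := by
          refine mul_le_mul_of_nonneg_left (mul_le_mul_of_nonneg_left this (by positivity))
            (norm_nonneg L)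
      _ = ‖L y‖ := by rw [hnorm]; field_simp

/-- Single-sample randomized norm estimate: for a real `m × n` matrix `B`, a standard
Gaussian vector `ω` in `ℝⁿ` (law the product of `n` copies of `N(0,1)`), and `α > 0`,
the probability that `‖B ω‖ < ‖B‖ / (α·√(2/π))` is at most `α⁻¹`, where `‖B‖` is the
`ℓ² → ℓ²` operator norm and `‖·‖` the Euclidean norm on `ℝᵐ`. -/
theorem randomized_norm_estimate_single
    {m n : ℕ} (B : Matrix (Fin m) (Fin n) ℝ) (α : ℝ) (hα : 0 < α) :
    (Measure.pi fun _ : Fin n => gaussianReal 0 1)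
      {ω : Fin n → ℝ |
        ‖(EuclideanSpace.equiv (Fin m) ℝ).symm (B.mulVec ω)‖ <
          ‖LinearMap.toContinuousLinearMap (Matrix.toEuclideanLin B)‖ /
            (α * Real.sqrt (2 / Real.pi))} ≤
      ENNReal.ofReal α⁻¹ := by
  classical
  set L := LinearMap.toContinuousLinearMap (Matrix.toEuclideanLin B) with hLdef
  set c := Real.sqrt (2 / Real.pi) with hc
  have hcpos : 0 < c := Real.sqrt_pos.mpr (by positivity)
  set P := (Measure.pi fun _ : Fin n => gaussianReal 0 1) with hP
  rcases eq_or_ne L 0 with hL | hL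
  · have : {ω : Fin n → ℝ |
        ‖(EuclideanSpace.equiv (Fin m) ℝ).symm (B.mulVec ω)‖ < ‖L‖ / (α * c)} = ∅ := by
      ext ω
      simp only [Set.mem_setOf_eq, Set.mem_empty_iff_false, iff_false, not_lt, hL, norm_zero,
        zero_div]
      exact norm_nonneg _
    rw [this]
    simp
  · obtain ⟨v, hv1, hvy⟩ := exists_good_unit_vector L hL
    have hLpos : 0 < ‖L‖ := by
      rcases (norm_nonneg L).lt_or_eq with h | h
      · exact h
      · exact absurd ((ContinuousLinearMap.opNorm_zero_iff L).mp h.symm) hL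
    have hn : n ≠ 0 := by
      rintro rfl
      have : v = 0 := Subsingleton.elim v 0
      rw [this, norm_zero] at hv1
      norm_num at hv1
    set i0 : Fin n := ⟨0, Nat.pos_of_ne_zero hn⟩ with hi0
    have horth : Orthonormal ℝ (({i0} : Set (Fin n)).restrict fun _ => v) := by
      constructor
      · intro i; exact hv1
      · intro i j hij
        exact absurd (Subsingleton.elim i j) hij
    obtain ⟨b, hb⟩ := horth.exists_orthonormalBasis_extension_of_card_eq
      (by simp [finrank_euclideanSpace_fin])
    have hbi0 : b i0 = v := hb i0 rfl
    set e := b.repr with he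
    set ψ : (Fin n → ℝ) → (Fin n → ℝ) :=
      fun ω => WithLp.equiv 2 (Fin n → ℝ) (e ((WithLp.equiv 2 (Fin n → ℝ)).symm ω)) with hψ
    set t : ℝ := (α * c)⁻¹ with htdef
    have ht0 : 0 ≤ t := by positivity
    have hψmble : Measurable ψ := by
      have h4 : ψ = ⇑(MeasurableEquiv.toLp 2 (Fin n → ℝ)).symm ∘ ⇑e ∘
          ⇑(MeasurableEquiv.toLp 2 (Fin n → ℝ)).symm.symm := by
        rfl
      rw [h4]
      exact (MeasurableEquiv.measurable _).comp
        (e.continuous.measurable.comp (MeasurableEquiv.measurable _))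
    have hS : MeasurableSet {x : Fin n → ℝ | x i0 ∈ Set.Ioo (-t) t} :=
      (measurable_pi_apply i0) measurableSet_Ioo
    have hsub : {ω : Fin n → ℝ |
        ‖(EuclideanSpace.equiv (Fin m) ℝ).symm (B.mulVec ω)‖ < ‖L‖ / (α * c)} ⊆
        ψ ⁻¹' {x : Fin n → ℝ | x i0 ∈ Set.Ioo (-t) t} := by
      intro ω hω
      simp only [Set.mem_setOf_eq] at hω
      set ω' : EuclideanSpace ℝ (Fin n) := (WithLp.equiv 2 (Fin n → ℝ)).symm ω with hω'
      have hkey : (EuclideanSpace.equiv (Fin m) ℝ).symm (B.mulVec ω) = L ω' := rfl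
      rw [hkey] at hω
      have h1 : ‖L‖ * |⟪v, ω'⟫| ≤ ‖L ω'‖ := hvy ω'
      have h2 : ‖L‖ * |⟪v, ω'⟫| < ‖L‖ / (α * c) := lt_of_le_of_lt h1 hω
      rw [div_eq_mul_inv, ← htdef] at h2
      have h3 : |⟪v, ω'⟫| < t := lt_of_mul_lt_mul_left h2 (le_of_lt hLpos) |>.trans_le le_rfl
      have h4 : ψ ω i0 = ⟪v, ω'⟫ := by
        show e ω' i0 = ⟪v, ω'⟫
        rw [he, b.repr_apply_apply, hbi0]
      simp only [Set.mem_preimage, Set.mem_setOf_eq, h4, Set.mem_Ioo]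
      exact abs_lt.mp h3
    calc P {ω : Fin n → ℝ |
        ‖(EuclideanSpace.equiv (Fin m) ℝ).symm (B.mulVec ω)‖ < ‖L‖ / (α * c)}
        ≤ P (ψ ⁻¹' {x : Fin n → ℝ | x i0 ∈ Set.Ioo (-t) t}) := measure_mono hsub
      _ = (P.map ψ) {x : Fin n → ℝ | x i0 ∈ Set.Ioo (-t) t} :=
          (Measure.map_apply hψmble hS).symm
      _ = P {x : Fin n → ℝ | x i0 ∈ Set.Ioo (-t) t} := by
          rw [hP, gaussian_pi_map_isometry n e]
      _ = gaussianReal 0 1 (Set.Ioo (-t) t) := gaussian_pi_eval n i0 _ measurableSet_Ioo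
      _ ≤ ENNReal.ofReal (t * c) := gaussianReal_Ioo_le t ht0
      _ = ENNReal.ofReal α⁻¹ := by
          congr 1
          rw [htdef]
          field_simp
end
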